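/- Let 1 ≤ n < m, let G be the digraph with adjacency matrix M_{m,n} with w,x,y,z ∈ {0,1}, let u ∈ {1,…,2^m} and v ∈ {2^m+1,…,2^m+2^n}. Then τ(u) = τ(v) if and only if both: (i) either u ∈ {1,…,2^(m−1)} and v ∈ {2^m+1,…,2^m+2^(n−1)}, or u ∈ {2^(m−1)+1,…,2^m} and v ∈ {2^m+2^(n−1)+1,…,2^m+2^n}; and (ii) y + z = 1 and w + x = 1. -/
import Mathlib


open scoped Classical

/-- For a nonzero integer `z`, `oddPart z` is `z` divided by the largest power of 2 dividing `z`. -/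
def oddPart (z : ℤ) : ℤ := z / 2 ^ (z.natAbs.factorization 2)

/-- `i` dominates `j` iff `odd (j - i) ≡ 1 (mod 4)`. -/
def Dominates (i j : ℤ) : Prop := oddPart (j - i) ≡ 1 [ZMOD 4]

/-- The edge relation, on vertices `{1, …, 2^m + 2^n}`, of the digraph whose adjacency
matrix is `M_{m,n}` with parameter values `w, x, y, z ∈ {0,1}`:  the two diagonal blocks
are the tournaments `T m` and `T n`, the top-right block alternates `w`/`x` and the
bottom-left block alternates `y`/`z` according to the parity of `i + j`. -/
def stockEdge (m n w x y z : ℕ) (i j : ℤ) : Prop :=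
  if i ≤ 2 ^ m ∧ j ≤ 2 ^ m then Dominates i j
  else if 2 ^ m < i ∧ 2 ^ m < j then Dominates i j
  else if i ≤ 2 ^ m then (if Even (i + j) then w = 1 else x = 1)
  else (if Even (i + j) then y = 1 else z = 1)

/-- In-degree of the vertex `v` in the digraph with adjacency matrix `M_{m,n}`. -/
noncomputable def sIn (m n w x y z : ℕ) (v : ℤ) : ℕ :=
  ((Finset.Icc (1 : ℤ) (2 ^ m + 2 ^ n)).filter (fun u => stockEdge m n w x y z u v)).card

/-- Out-degree of the vertex `v` in the digraph with adjacency matrix `M_{m,n}`. -/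
noncomputable def sOut (m n w x y z : ℕ) (v : ℤ) : ℕ :=
  ((Finset.Icc (1 : ℤ) (2 ^ m + 2 ^ n)).filter (fun u => stockEdge m n w x y z v u)).card

/-- The tally (in-degree, out-degree) of `v` in the digraph with adjacency matrix `M_{m,n}`. -/
noncomputable def sTally (m n w x y z : ℕ) (v : ℤ) : ℕ × ℕ :=
  (sIn m n w x y z v, sOut m n w x y z v)

namespace Stmt13Aux

/-- `Good d` means `oddPart d ≡ 1 (mod 4)`. -/
def Good (d : ℤ) : Prop := oddPart d % 4 = 1
/-- `Bad d` means `oddPart d ≡ 3 (mod 4)`. -/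
def Bad (d : ℤ) : Prop := oddPart d % 4 = 3

lemma dominates_iff (i j : ℤ) : Dominates i j ↔ Good (j - i) := by
  show _ % _ = _ % _ ↔ _
  unfold Good
  omega

lemma pow_fac_dvd (d : ℤ) : (2:ℤ) ^ (d.natAbs.factorization 2) ∣ d := by
  have h1 : (2:ℕ) ^ (d.natAbs.factorization 2) ∣ d.natAbs := Nat.ordProj_dvd _ 2
  have h2 : (2:ℤ) ^ (d.natAbs.factorization 2) ∣ (d.natAbs : ℤ) := by exact_mod_cast h1
  exact Int.dvd_natAbs.mp h2

lemma mul_oddPart (d : ℤ) : 2 ^ (d.natAbs.factorization 2) * oddPart d = d :=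
  Int.mul_ediv_cancel' (pow_fac_dvd d)

lemma odd_oddPart {d : ℤ} (hd : d ≠ 0) : oddPart d % 2 = 1 := by
  rcases Int.emod_two_eq_zero_or_one (oddPart d) with h | h
  · exfalso
    obtain ⟨t, ht⟩ : (2:ℤ) ∣ oddPart d := by omega
    set a := d.natAbs.factorization 2 with ha
    have hd2 : d = 2 ^ (a + 1) * t := by
      have := mul_oddPart d
      rw [ht] at this
      rw [← this]; ring
    have hdvd : (2:ℕ) ^ (a+1) ∣ d.natAbs := by
      have h5 : (2:ℤ) ^ (a+1) ∣ d := ⟨t, hd2⟩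
      have h6 : (2:ℤ) ^ (a+1) ∣ (d.natAbs : ℤ) := Int.dvd_natAbs.mpr h5
      exact_mod_cast h6
    exact Nat.pow_succ_factorization_not_dvd (Int.natAbs_ne_zero.mpr hd) Nat.prime_two hdvd
  · exact h

lemma oddPart_of (a : ℕ) (o : ℤ) (ho : o % 2 = 1) : oddPart (2 ^ a * o) = o := by
  have hno : o ≠ 0 := by omega
  have h1 : ((2:ℤ) ^ a * o).natAbs = 2 ^ a * o.natAbs := by
    rw [Int.natAbs_mul, Int.natAbs_pow]
    rfl
  have h2 : (2 ^ a * o.natAbs).factorization 2 = a := by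
    rw [Nat.factorization_mul (by positivity) (Int.natAbs_ne_zero.mpr hno)]
    have h3 : ((2:ℕ) ^ a).factorization = Finsupp.single 2 a :=
      Nat.Prime.factorization_pow Nat.prime_two
    have h4 : (o.natAbs).factorization 2 = 0 := by
      apply Nat.factorization_eq_zero_of_not_dvd
      intro hdvd
      have h7 : (2:ℤ) ∣ (o.natAbs : ℤ) := by exact_mod_cast hdvd
      have : (2:ℤ) ∣ o := Int.dvd_natAbs.mp h7
      omega
    simp [h3, h4]
  unfold oddPart
  rw [h1, h2]
  exact Int.mul_ediv_cancel_left _ (by positivity)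

lemma oddPart_zero : oddPart 0 = 0 := by simp [oddPart]

lemma oddPart_decomp {d : ℤ} (hd : d ≠ 0) :
    ∃ a : ℕ, ∃ o : ℤ, o % 2 = 1 ∧ d = 2 ^ a * o ∧ oddPart d = o :=
  ⟨d.natAbs.factorization 2, oddPart d, odd_oddPart hd, (mul_oddPart d).symm, rfl⟩

lemma oddPart_neg (d : ℤ) : oddPart (-d) = - oddPart d := by
  rcases eq_or_ne d 0 with rfl | hd
  · simp [oddPart_zero]
  · obtain ⟨a, o, ho, hdd, hop⟩ := oddPart_decomp hd
    have h : -d = 2 ^ a * (-o) := by rw [hdd]; ring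
    rw [h, oddPart_of a (-o) (by omega), hop]

lemma good_or_bad {d : ℤ} (hd : d ≠ 0) : (Good d ∧ ¬ Bad d) ∨ (Bad d ∧ ¬ Good d) := by
  have := odd_oddPart hd
  unfold Good Bad
  omega

lemma not_good_zero : ¬ Good 0 := by unfold Good; rw [oddPart_zero]; omega

lemma bad_neg {d : ℤ} (hd : d ≠ 0) : Bad (-d) ↔ Good d := by
  unfold Good Bad
  rw [oddPart_neg]
  have := odd_oddPart hd
  omega

lemma good_neg {d : ℤ} (hd : d ≠ 0) : Good (-d) ↔ Bad d := by
  unfold Good Bad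
  rw [oddPart_neg]
  have := odd_oddPart hd
  omega

lemma good_two_pow (k : ℕ) : Good ((2:ℤ) ^ k) := by
  unfold Good
  rw [show (2:ℤ)^k = 2^k * 1 by ring, oddPart_of k 1 (by norm_num)]
  norm_num

lemma flip {k : ℕ} {d : ℤ} (h0 : 0 < d) (h1 : d < 2 ^ k) (h2 : d ≠ 2 ^ (k-1)) :
    Good (2 ^ k - d) ↔ Bad d := by
  obtain ⟨a, o, ho, hd, hop⟩ := oddPart_decomp (show d ≠ 0 by omega)
  have hpa : (0:ℤ) < 2 ^ a := by positivity
  have ho0 : 1 ≤ o := by nlinarith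
  have hk : 1 ≤ k := by
    by_contra hcon
    have : k = 0 := by omega
    subst this
    simp at h1
    omega
  have hale : a + 2 ≤ k := by
    by_contra hcon
    push_neg at hcon
    rcases Nat.lt_or_ge a k with hak | hak
    · -- a = k - 1
      have hae : a = k - 1 := by omega
      have hpow : (2:ℤ) ^ k = 2 ^ a * 2 := by
        rw [← pow_succ]; congr 1; omega
      have : o < 2 := by nlinarith
      have : o = 1 := by omega
      rw [this, mul_one] at hd
      exact h2 (by rw [hd, hae])
    · have hle : (2:ℤ) ^ k ≤ 2 ^ a := pow_le_pow_right₀ (by norm_num) hak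
      nlinarith
  have hpow : (2:ℤ) ^ a * 2 ^ (k - a) = 2 ^ k := by
    rw [← pow_add]; congr 1; omega
  have hmod4 : ((2:ℤ) ^ (k - a)) % 4 = 0 := by
    have h4 : (2:ℤ) ^ (k - a) = 2 ^ (k - a - 2) * 4 := by
      rw [show (4:ℤ) = 2^2 by norm_num, ← pow_add]; congr 1; omega
    rw [h4]
    omega
  have hsub : (2:ℤ) ^ k - d = 2 ^ a * (2 ^ (k - a) - o) := by
    rw [hd, ← hpow]; ring
  have hodd' : ((2:ℤ) ^ (k - a) - o) % 2 = 1 := by omega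
  unfold Good Bad
  rw [hsub, oddPart_of a _ hodd', hop]
  omega

open Finset in
lemma count_even (u : ℤ) : ∀ (N : ℕ) (a : ℤ),
    ((Ico a (a + 2*(N:ℤ))).filter (fun j => Even (j + u))).card = N := by
  intro N
  induction N with
  | zero => intro a; simp
  | succ N ih =>
    intro a
    have hcast : ((N + 1 : ℕ) : ℤ) = (N : ℤ) + 1 := by push_cast; ring
    rw [hcast]
    have hsplit : Ico a (a + 2*((N:ℤ)+1)) = Ico a (a+2) ∪ Ico (a+2) ((a+2) + 2*(N:ℤ)) := by
      rw [Finset.Ico_union_Ico_eq_Ico (by omega) (by omega)]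
      congr 1
      ring
    rw [hsplit, filter_union,
      card_union_of_disjoint (disjoint_filter_filter (Ico_disjoint_Ico_consecutive _ _ _)),
      ih (a+2)]
    have hpair : Ico a (a+2) = ({a, a+1} : Finset ℤ) := by
      ext t
      simp only [mem_Ico, mem_insert, mem_singleton]
      omega
    rw [hpair]
    by_cases h : Even (a + u)
    · have hone : ({a, a+1} : Finset ℤ).filter (fun j => Even (j+u)) = {a} := by
        ext t
        rw [Int.even_iff] at h
        simp only [mem_filter, mem_insert, mem_singleton, Int.even_iff]
        omega
      rw [hone]
      simp only [Finset.card_singleton]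
      omega
    · have hone : ({a, a+1} : Finset ℤ).filter (fun j => Even (j+u)) = {a+1} := by
        ext t
        rw [Int.even_iff] at h
        simp only [mem_filter, mem_insert, mem_singleton, Int.even_iff]
        omega
      rw [hone]
      simp only [Finset.card_singleton]
      omega

open Finset in
lemma count_odd (u : ℤ) (N : ℕ) (a : ℤ) :
    ((Ico a (a + 2*(N:ℤ))).filter (fun j => ¬ Even (j + u))).card = N := by
  have h1 := count_even u N a
  have h2 : ((Ico a (a + 2*(N:ℤ))).filter (fun j => ¬ Even (j + u))).card
      = (Ico a (a + 2*(N:ℤ))).card - ((Ico a (a + 2*(N:ℤ))).filter (fun j => Even (j + u))).card := by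
    rw [Finset.filter_not, card_sdiff_of_subset (filter_subset _ _)]
  rw [h2, h1, Int.card_Ico]
  omega

open Finset in
lemma count_if (u : ℤ) (ww xx : ℕ) (hww : ww ≤ 1) (hxx : xx ≤ 1) (N : ℕ) (a : ℤ) :
    ((Ico a (a + 2*(N:ℤ))).filter (fun j => if Even (j + u) then ww = 1 else xx = 1)).card
      = (ww + xx) * N := by
  interval_cases ww <;> interval_cases xx
  · rw [Finset.filter_congr (q := fun _ => False)
      (fun j _ => by by_cases h : Even (j+u) <;> simp [h])]
    simp
  · rw [Finset.filter_congr (q := fun j => ¬ Even (j + u))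
      (fun j _ => by by_cases h : Even (j+u) <;> simp [h]), count_odd]
    omega
  · rw [Finset.filter_congr (q := fun j => Even (j + u))
      (fun j _ => by by_cases h : Even (j+u) <;> simp [h]), count_even]
    omega
  · rw [Finset.filter_congr (q := fun _ => True)
      (fun j _ => by by_cases h : Even (j+u) <;> simp [h]), Finset.filter_true, Int.card_Ico]
    omega

open Finset in
lemma reflect (k : ℕ) (hk : 1 ≤ k) (t : ℤ) (ht1 : 1 ≤ t) (ht2 : t ≤ 2^k) :
    ((Ico t ((2:ℤ)^k)).filter (fun d => Good d)).card
      = ((Ico (1:ℤ) (2^k + 1 - t)).filter (fun d => Bad d)).card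
        + (if t ≤ (2:ℤ)^(k-1) then 1 else 0) := by
  have hhalf : (2:ℤ)^k = 2 * 2^(k-1) := by rw [← pow_succ']; congr 1; omega
  have hcpos : (0:ℤ) < 2^(k-1) := by positivity
  have hgc : Good ((2:ℤ)^(k-1)) := good_two_pow _
  have hbij : ((((Ico t ((2:ℤ)^k)).filter (fun d => Good d))).erase ((2:ℤ)^(k-1))).card
      = ((Ico (1:ℤ) (2^k + 1 - t)).filter (fun d => Bad d)).card := by
    refine card_bij' (fun e _ => (2:ℤ)^k - e) (fun e _ => (2:ℤ)^k - e) ?_ ?_ ?_ ?_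
    · intro e he
      rw [mem_erase, mem_filter, mem_Ico] at he
      obtain ⟨hne, ⟨hle, hlt⟩, hg⟩ := he
      simp only [mem_filter, mem_Ico]
      refine ⟨⟨by omega, by omega⟩, ?_⟩
      have hf := flip (k := k) (d := 2^k - e) (by omega) (by omega) (by omega)
      rw [show (2:ℤ)^k - (2^k - e) = e by ring] at hf
      exact hf.mp hg
    · intro e he
      rw [mem_filter, mem_Ico] at he
      obtain ⟨⟨hle, hlt⟩, hb⟩ := he
      have hne : e ≠ 2^(k-1) := by
        rintro rfl
        rcases good_or_bad (show ((2:ℤ)^(k-1)) ≠ 0 by omega) with ⟨_, hnb⟩ | ⟨_, hng⟩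
        exacts [hnb hb, hng hgc]
      simp only [mem_erase, mem_filter, mem_Ico]
      refine ⟨by omega, ⟨by omega, by omega⟩, ?_⟩
      exact (flip (k := k) (d := e) (by omega) (by omega) hne).mpr hb
    · intro e _; ring
    · intro e _; ring
  rw [← hbij]
  by_cases h : t ≤ (2:ℤ)^(k-1)
  · rw [if_pos h]
    have hmem : (2:ℤ)^(k-1) ∈ (Ico t ((2:ℤ)^k)).filter (fun d => Good d) := by
      rw [mem_filter, mem_Ico]
      exact ⟨⟨h, by omega⟩, hgc⟩
    have hpos : 1 ≤ ((Ico t ((2:ℤ)^k)).filter (fun d => Good d)).card :=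
      card_pos.mpr ⟨_, hmem⟩
    rw [card_erase_of_mem hmem]
    omega
  · rw [if_neg h, erase_eq_of_notMem (fun hmem => by
      rw [mem_filter, mem_Ico] at hmem
      omega)]
    omega

open Finset in
lemma total (k : ℕ) (hk : 1 ≤ k) :
    ((Ico (1:ℤ) ((2:ℤ)^k)).filter (fun d => Good d)).card = 2^(k-1) := by
  have hhalfZ : (2:ℤ)^k = 2 * 2^(k-1) := by rw [← pow_succ']; congr 1; omega
  have hhalfN : (2:ℕ)^k = 2 * 2^(k-1) := by rw [← pow_succ']; congr 1; omega
  have h1N : 1 ≤ (2:ℕ)^(k-1) := Nat.one_le_two_pow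
  have hcpos : (0:ℤ) < 2^(k-1) := by positivity
  have hcast : (((2:ℕ)^k : ℕ) : ℤ) = (2:ℤ)^k := by push_cast; ring
  have h := reflect k hk 1 le_rfl (by omega)
  rw [if_pos (by omega : (1:ℤ) ≤ 2^(k-1)),
    show (2:ℤ)^k + 1 - 1 = 2^k by ring] at h
  have hdisj : Disjoint ((Ico (1:ℤ) ((2:ℤ)^k)).filter (fun d => Good d))
      ((Ico (1:ℤ) ((2:ℤ)^k)).filter (fun d => Bad d)) := by
    rw [Finset.disjoint_left]
    intro s hs1 hs2
    rw [mem_filter] at hs1 hs2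
    have := hs1.2; have := hs2.2
    unfold Good Bad at *
    omega
  have hpart : ((Ico (1:ℤ) ((2:ℤ)^k)).filter (fun d => Good d)).card
      + ((Ico (1:ℤ) ((2:ℤ)^k)).filter (fun d => Bad d)).card = 2^k - 1 := by
    rw [← card_union_of_disjoint hdisj, ← filter_or,
      filter_true_of_mem (fun d hd => by
        rw [mem_Ico] at hd
        rcases good_or_bad (show d ≠ 0 by omega) with ⟨hg, _⟩ | ⟨hb, _⟩
        · exact Or.inl hg
        · exact Or.inr hb),
      Int.card_Ico]
    omega
  omega

open Finset in
lemma count_good_interval (k : ℕ) (hk : 1 ≤ k) (t : ℤ) (ht1 : 1 ≤ t) (ht2 : t ≤ 2^k) :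
    ((Icc (t - 2^k) (t - 1)).filter (fun d => Good d)).card
      = 2^(k-1) - (if t ≤ (2:ℤ)^(k-1) then 1 else 0) := by
  have hhalfZ : (2:ℤ)^k = 2 * 2^(k-1) := by rw [← pow_succ']; congr 1; omega
  have hcpos : (0:ℤ) < 2^(k-1) := by positivity
  have h0 : Icc (t - (2:ℤ)^k) (t - 1) = Ico (t - (2:ℤ)^k) t := by
    ext s
    rw [mem_Icc, mem_Ico]
    omega
  have h1 : Ico (t - (2:ℤ)^k) t = Ico (t - (2:ℤ)^k) 1 ∪ Ico 1 t :=
    (Ico_union_Ico_eq_Ico (by omega) (by omega)).symm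
  have hz : (Ico (t - (2:ℤ)^k) 1).filter (fun d => Good d)
      = (Ico (t - (2:ℤ)^k) 0).filter (fun d => Good d) := by
    ext s
    rw [mem_filter, mem_filter, mem_Ico, mem_Ico]
    constructor
    · rintro ⟨⟨ha, hb⟩, hg⟩
      have hs0 : s ≠ 0 := by rintro rfl; exact not_good_zero hg
      exact ⟨⟨ha, by omega⟩, hg⟩
    · rintro ⟨⟨ha, hb⟩, hg⟩
      exact ⟨⟨ha, by omega⟩, hg⟩
  have hneg : ((Ico (t - (2:ℤ)^k) 0).filter (fun d => Good d)).card
      = ((Ico (1:ℤ) (2^k + 1 - t)).filter (fun d => Bad d)).card := by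
    refine card_bij' (fun d _ => -d) (fun e _ => -e) ?_ ?_ ?_ ?_
    · intro d hd
      rw [mem_filter, mem_Ico] at hd
      obtain ⟨⟨ha, hb⟩, hg⟩ := hd
      simp only [mem_filter, mem_Ico]
      exact ⟨⟨by omega, by omega⟩, (bad_neg (show d ≠ 0 by omega)).mpr hg⟩
    · intro e he
      rw [mem_filter, mem_Ico] at he
      obtain ⟨⟨ha, hb⟩, hbad⟩ := he
      simp only [mem_filter, mem_Ico]
      exact ⟨⟨by omega, by omega⟩, (good_neg (show e ≠ 0 by omega)).mpr hbad⟩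
    · intro d _; ring
    · intro e _; ring
  have hsum : ((Ico (1:ℤ) ((2:ℤ)^k)).filter (fun d => Good d)).card
      = ((Ico (1:ℤ) t).filter (fun d => Good d)).card
        + ((Ico t ((2:ℤ)^k)).filter (fun d => Good d)).card := by
    rw [← Ico_union_Ico_eq_Ico ht1 (by omega), filter_union,
      card_union_of_disjoint (disjoint_filter_filter (Ico_disjoint_Ico_consecutive _ _ _))]
  have htot := total k hk
  have hrefl := reflect k hk t ht1 ht2
  rw [h0, h1, filter_union,
    card_union_of_disjoint (disjoint_filter_filter (Ico_disjoint_Ico_consecutive _ _ _)),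
    hz, hneg]
  by_cases hcase : t ≤ (2:ℤ)^(k-1)
  · rw [if_pos hcase] at hrefl ⊢
    omega
  · rw [if_neg hcase] at hrefl ⊢
    omega

open Finset in
lemma deg_in (k : ℕ) (hk : 1 ≤ k) (lo u : ℤ) (h1 : lo ≤ u) (h2 : u ≤ lo + 2^k - 1) :
    ((Icc lo (lo + 2^k - 1)).filter (fun i => Dominates i u)).card
      = 2^(k-1) - (if u ≤ lo + 2^(k-1) - 1 then 1 else 0) := by
  have hbij : ((Icc lo (lo + (2:ℤ)^k - 1)).filter (fun i => Dominates i u)).card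
      = ((Icc (u - lo + 1 - 2^k) (u - lo + 1 - 1)).filter (fun d => Good d)).card := by
    refine card_bij' (fun i _ => u - i) (fun d _ => u - d) ?_ ?_ ?_ ?_
    · intro i hi
      rw [mem_filter, mem_Icc] at hi
      simp only [mem_filter, mem_Icc]
      exact ⟨⟨by omega, by omega⟩, (dominates_iff i u).mp hi.2⟩
    · intro d hd
      rw [mem_filter, mem_Icc] at hd
      simp only [mem_filter, mem_Icc]
      refine ⟨⟨by omega, by omega⟩, ?_⟩
      rw [dominates_iff, show u - (u - d) = d by ring]
      exact hd.2
    · intro i _; ring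
    · intro d _; ring
  rw [hbij, count_good_interval k hk (u - lo + 1) (by omega) (by omega)]
  by_cases hc : u - lo + 1 ≤ (2:ℤ)^(k-1)
  · rw [if_pos hc, if_pos (by omega)]
  · rw [if_neg hc, if_neg (by omega)]

open Finset in
lemma deg_out (k : ℕ) (hk : 1 ≤ k) (lo u : ℤ) (h1 : lo ≤ u) (h2 : u ≤ lo + 2^k - 1) :
    ((Icc lo (lo + 2^k - 1)).filter (fun i => Dominates u i)).card
      = 2^(k-1) - (if lo + 2^(k-1) ≤ u then 1 else 0) := by
  have hhalfZ : (2:ℤ)^k = 2 * 2^(k-1) := by rw [← pow_succ']; congr 1; omega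
  have hbij : ((Icc lo (lo + (2:ℤ)^k - 1)).filter (fun i => Dominates u i)).card
      = ((Icc ((lo + 2^k - u) - 2^k) ((lo + 2^k - u) - 1)).filter (fun d => Good d)).card := by
    refine card_bij' (fun i _ => i - u) (fun d _ => u + d) ?_ ?_ ?_ ?_
    · intro i hi
      rw [mem_filter, mem_Icc] at hi
      simp only [mem_filter, mem_Icc]
      refine ⟨⟨by omega, by omega⟩, ?_⟩
      have := (dominates_iff u i).mp hi.2
      rwa [show i - u = i - u from rfl] at this
    · intro d hd
      rw [mem_filter, mem_Icc] at hd
      simp only [mem_filter, mem_Icc]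
      refine ⟨⟨by omega, by omega⟩, ?_⟩
      rw [dominates_iff, show u + d - u = d by ring]
      exact hd.2
    · intro i _; ring
    · intro d _; ring
  rw [hbij, count_good_interval k hk (lo + 2^k - u) (by omega) (by omega)]
  by_cases hc : lo + (2:ℤ)^k - u ≤ (2:ℤ)^(k-1)
  · rw [if_pos hc, if_pos (by omega)]
  · rw [if_neg hc, if_neg (by omega)]

end Stmt13Aux

set_option maxHeartbeats 2000000 in
open Stmt13Aux in
theorem stmt_13 (m n w x y z : ℕ) (hn : 1 ≤ n) (hnm : n < m)
    (hw : w ≤ 1) (hx : x ≤ 1) (hy : y ≤ 1) (hz : z ≤ 1)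
    (u v : ℤ) (hu : u ∈ Finset.Icc (1 : ℤ) (2 ^ m))
    (hv : v ∈ Finset.Icc ((2 : ℤ) ^ m + 1) (2 ^ m + 2 ^ n)) :
    sTally m n w x y z u = sTally m n w x y z v ↔
      (((u ∈ Finset.Icc (1 : ℤ) (2 ^ (m - 1)) ∧
          v ∈ Finset.Icc ((2 : ℤ) ^ m + 1) (2 ^ m + 2 ^ (n - 1))) ∨
        (u ∈ Finset.Icc ((2 : ℤ) ^ (m - 1) + 1) (2 ^ m) ∧
          v ∈ Finset.Icc ((2 : ℤ) ^ m + 2 ^ (n - 1) + 1) (2 ^ m + 2 ^ n))) ∧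
       (y + z = 1 ∧ w + x = 1)) := by
  classical
  have hm1 : 1 ≤ m := by omega
  rw [Finset.mem_Icc] at hu hv
  have hmZ : (2:ℤ)^m = 2 * 2^(m-1) := by rw [← pow_succ']; congr 1; omega
  have hnZ : (2:ℤ)^n = 2 * 2^(n-1) := by rw [← pow_succ']; congr 1; omega
  have hposm : (0:ℤ) < 2^(m-1) := by positivity
  have hposn : (0:ℤ) < 2^(n-1) := by positivity
  have hmn : (2:ℤ)^(n-1) < 2^(m-1) := by
    have h : n - 1 < m - 1 := by omega
    exact pow_lt_pow_right₀ (by norm_num) h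
  have hcastm : (((2:ℕ)^(m-1) : ℕ) : ℤ) = (2:ℤ)^(m-1) := by push_cast; ring
  have hcastn : (((2:ℕ)^(n-1) : ℕ) : ℤ) = (2:ℤ)^(n-1) := by push_cast; ring
  have hmnN : (2:ℕ)^(n-1) < 2^(m-1) := by
    have h : n - 1 < m - 1 := by omega
    exact Nat.pow_lt_pow_right (by norm_num) h
  have h1N : 1 ≤ (2:ℕ)^(n-1) := Nat.one_le_two_pow
  have h1mN : 1 ≤ (2:ℕ)^(m-1) := Nat.one_le_two_pow
  have hsplitIcc : Finset.Icc (1:ℤ) (2^m + 2^n)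
      = Finset.Icc (1:ℤ) (2^m) ∪ Finset.Icc ((2:ℤ)^m + 1) (2^m + 2^n) := by
    ext s
    simp only [Finset.mem_Icc, Finset.mem_union]
    omega
  have hdisj : Disjoint (Finset.Icc (1:ℤ) (2^m)) (Finset.Icc ((2:ℤ)^m + 1) (2^m + 2^n)) := by
    rw [Finset.disjoint_left]
    intro s h1 h2
    rw [Finset.mem_Icc] at h1 h2
    omega
  have hsetA : Finset.Icc (1:ℤ) (2^m) = Finset.Icc (1:ℤ) (1 + 2^m - 1) := by congr 1; ring
  have hsetB : Finset.Icc ((2:ℤ)^m + 1) (2^m + 2^n)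
      = Finset.Icc ((2:ℤ)^m + 1) (((2:ℤ)^m + 1) + 2^n - 1) := by congr 1; ring
  have hsetA' : Finset.Icc (1:ℤ) (2^m)
      = Finset.Ico (1:ℤ) (1 + 2*(((2:ℕ)^(m-1) : ℕ) : ℤ)) := by
    ext s
    simp only [Finset.mem_Icc, Finset.mem_Ico]
    omega
  have hsetB' : Finset.Icc ((2:ℤ)^m + 1) (2^m + 2^n)
      = Finset.Ico ((2:ℤ)^m + 1) (((2:ℤ)^m + 1) + 2*(((2:ℕ)^(n-1) : ℕ) : ℤ)) := by
    ext s
    simp only [Finset.mem_Icc, Finset.mem_Ico]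
    omega
  have hInU : sIn m n w x y z u
      = (2^(m-1) - (if u ≤ (2:ℤ)^(m-1) then 1 else 0)) + (y + z) * 2^(n-1) := by
    unfold sIn
    rw [hsplitIcc, Finset.filter_union,
      Finset.card_union_of_disjoint (Finset.disjoint_filter_filter hdisj)]
    congr 1
    · rw [Finset.filter_congr (q := fun i => Dominates i u)
        (fun i hi => by
          rw [Finset.mem_Icc] at hi
          unfold stockEdge
          rw [if_pos ⟨hi.2, hu.2⟩]),
        hsetA, deg_in m hm1 1 u (by omega) (by omega)]
      by_cases hc : u ≤ (2:ℤ)^(m-1)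
      · rw [if_pos (by omega : u ≤ 1 + (2:ℤ)^(m-1) - 1), if_pos hc]
      · rw [if_neg (by omega : ¬ u ≤ 1 + (2:ℤ)^(m-1) - 1), if_neg hc]
    · rw [Finset.filter_congr (q := fun j => if Even (j + u) then y = 1 else z = 1)
        (fun j hj => by
          rw [Finset.mem_Icc] at hj
          unfold stockEdge
          rw [if_neg (by omega : ¬(j ≤ (2:ℤ)^m ∧ u ≤ (2:ℤ)^m)),
            if_neg (by omega : ¬((2:ℤ)^m < j ∧ (2:ℤ)^m < u)),
            if_neg (by omega : ¬ j ≤ (2:ℤ)^m)]),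
        hsetB', count_if u y z hy hz (2^(n-1)) ((2:ℤ)^m + 1)]
  have hOutU : sOut m n w x y z u
      = (2^(m-1) - 1 + (if u ≤ (2:ℤ)^(m-1) then 1 else 0)) + (w + x) * 2^(n-1) := by
    unfold sOut
    rw [hsplitIcc, Finset.filter_union,
      Finset.card_union_of_disjoint (Finset.disjoint_filter_filter hdisj)]
    congr 1
    · rw [Finset.filter_congr (q := fun i => Dominates u i)
        (fun i hi => by
          rw [Finset.mem_Icc] at hi
          unfold stockEdge
          rw [if_pos ⟨hu.2, hi.2⟩]),
        hsetA, deg_out m hm1 1 u (by omega) (by omega)]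
      by_cases hc : u ≤ (2:ℤ)^(m-1)
      · rw [if_neg (by omega : ¬ (1:ℤ) + 2^(m-1) ≤ u), if_pos hc]
        omega
      · rw [if_pos (by omega : (1:ℤ) + 2^(m-1) ≤ u), if_neg hc]
        omega
    · rw [Finset.filter_congr (q := fun j => if Even (j + u) then w = 1 else x = 1)
        (fun j hj => by
          rw [Finset.mem_Icc] at hj
          unfold stockEdge
          rw [if_neg (by omega : ¬(u ≤ (2:ℤ)^m ∧ j ≤ (2:ℤ)^m)),
            if_neg (by omega : ¬((2:ℤ)^m < u ∧ (2:ℤ)^m < j)),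
            if_pos hu.2, add_comm u j]),
        hsetB', count_if u w x hw hx (2^(n-1)) ((2:ℤ)^m + 1)]
  have hInV : sIn m n w x y z v
      = (w + x) * 2^(m-1) + (2^(n-1) - (if v ≤ (2:ℤ)^m + 2^(n-1) then 1 else 0)) := by
    unfold sIn
    rw [hsplitIcc, Finset.filter_union,
      Finset.card_union_of_disjoint (Finset.disjoint_filter_filter hdisj)]
    congr 1
    · rw [Finset.filter_congr (q := fun i => if Even (i + v) then w = 1 else x = 1)
        (fun i hi => by
          rw [Finset.mem_Icc] at hi
          unfold stockEdge
          rw [if_neg (by omega : ¬(i ≤ (2:ℤ)^m ∧ v ≤ (2:ℤ)^m)),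
            if_neg (by omega : ¬((2:ℤ)^m < i ∧ (2:ℤ)^m < v)),
            if_pos hi.2]),
        hsetA', count_if v w x hw hx (2^(m-1)) 1]
    · rw [Finset.filter_congr (q := fun i => Dominates i v)
        (fun i hi => by
          rw [Finset.mem_Icc] at hi
          unfold stockEdge
          rw [if_neg (by omega : ¬(i ≤ (2:ℤ)^m ∧ v ≤ (2:ℤ)^m)),
            if_pos (⟨by omega, by omega⟩ : (2:ℤ)^m < i ∧ (2:ℤ)^m < v)]),
        hsetB, deg_in n hn ((2:ℤ)^m + 1) v (by omega) (by omega)]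
      by_cases hc : v ≤ (2:ℤ)^m + 2^(n-1)
      · rw [if_pos (by omega : v ≤ (2:ℤ)^m + 1 + 2^(n-1) - 1), if_pos hc]
      · rw [if_neg (by omega : ¬ v ≤ (2:ℤ)^m + 1 + 2^(n-1) - 1), if_neg hc]
  have hOutV : sOut m n w x y z v
      = (y + z) * 2^(m-1) + (2^(n-1) - 1 + (if v ≤ (2:ℤ)^m + 2^(n-1) then 1 else 0)) := by
    unfold sOut
    rw [hsplitIcc, Finset.filter_union,
      Finset.card_union_of_disjoint (Finset.disjoint_filter_filter hdisj)]
    congr 1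
    · rw [Finset.filter_congr (q := fun j => if Even (j + v) then y = 1 else z = 1)
        (fun j hj => by
          rw [Finset.mem_Icc] at hj
          unfold stockEdge
          rw [if_neg (by omega : ¬(v ≤ (2:ℤ)^m ∧ j ≤ (2:ℤ)^m)),
            if_neg (by omega : ¬((2:ℤ)^m < v ∧ (2:ℤ)^m < j)),
            if_neg (by omega : ¬ v ≤ (2:ℤ)^m), add_comm v j]),
        hsetA', count_if v y z hy hz (2^(m-1)) 1]
    · rw [Finset.filter_congr (q := fun j => Dominates v j)
        (fun j hj => by
          rw [Finset.mem_Icc] at hj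
          unfold stockEdge
          rw [if_neg (by omega : ¬(v ≤ (2:ℤ)^m ∧ j ≤ (2:ℤ)^m)),
            if_pos (⟨by omega, by omega⟩ : (2:ℤ)^m < v ∧ (2:ℤ)^m < j)]),
        hsetB, deg_out n hn ((2:ℤ)^m + 1) v (by omega) (by omega)]
      by_cases hc : v ≤ (2:ℤ)^m + 2^(n-1)
      · rw [if_neg (by omega : ¬ (2:ℤ)^m + 1 + 2^(n-1) ≤ v), if_pos hc]
        omega
      · rw [if_pos (by omega : (2:ℤ)^m + 1 + 2^(n-1) ≤ v), if_neg hc]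
        omega
  unfold sTally
  rw [Prod.mk.injEq, hInU, hOutU, hInV, hOutV]
  simp only [Finset.mem_Icc]
  by_cases HU : u ≤ (2:ℤ)^(m-1) <;> by_cases HV : v ≤ (2:ℤ)^m + 2^(n-1)
  · rw [if_pos HU, if_pos HV]
    interval_cases w <;> interval_cases x <;> interval_cases y <;> interval_cases z <;> omega
  · rw [if_pos HU, if_neg HV]
    interval_cases w <;> interval_cases x <;> interval_cases y <;> interval_cases z <;> omega
  · rw [if_neg HU, if_pos HV]
    interval_cases w <;> interval_cases x <;> interval_cases y <;> interval_cases z <;> omega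
  · rw [if_neg HU, if_neg HV]
    interval_cases w <;> interval_cases x <;> interval_cases y <;> interval_cases z <;> omega
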